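/- Let X_ε → X in L¹(P), with all laws supported in a common compact set U ⊂ ℝⁿ, G ∈ {0,1} with P(G=k)>0, and f continuous and bounded on U. If W₁(law(X_ε|G=0), law(X_ε|G=1)) → 0 as ε → 0⁺, then W₁(law(f(X_ε)|G=0), law(f(X_ε)|G=1)) → 0 and W₁(law(f(X)|G=0), law(f(X)|G=1)) = 0. -/

import Mathlib

open MeasureTheory ProbabilityTheory Set Filter Topology
open scoped NNReal ENNReal

noncomputable def W1E {E : Type*} [MeasurableSpace E] [MetricSpace E]
    (μ ν : Measure E) : ℝ :=
  ⨅ π : {π : Measure (E × E) // π.map Prod.fst = μ ∧ π.map Prod.snd = ν},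
    ∫ p, dist p.1 p.2 ∂(π.1)

noncomputable def W1 (μ ν : Measure ℝ) : ℝ :=
  ⨅ π : {π : Measure (ℝ × ℝ) // π.map Prod.fst = μ ∧ π.map Prod.snd = ν},
    ∫ p, |p.1 - p.2| ∂(π.1)

section Helpers

variable {E : Type*} [MeasurableSpace E] [MetricSpace E]

lemma integrable_of_bdd {Ω : Type*} [MeasurableSpace Ω] {Q : Measure Ω} [IsFiniteMeasure Q]
    {h : Ω → ℝ} (hm : AEStronglyMeasurable h Q) {C : ℝ} (hb : ∀ᵐ ω ∂Q, |h ω| ≤ C) :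
    Integrable h Q :=
  Integrable.mono' (integrable_const C) hm (by simpa [Real.norm_eq_abs] using hb)

lemma W1_nonneg (μ ν : Measure ℝ) : 0 ≤ W1 μ ν :=
  Real.iInf_nonneg fun π => integral_nonneg fun p => abs_nonneg _

lemma W1_bddBelow (μ ν : Measure ℝ) :
    BddBelow (Set.range fun π : {π : Measure (ℝ × ℝ) // π.map Prod.fst = μ ∧ π.map Prod.snd = ν}
      => ∫ p, |p.1 - p.2| ∂(π.1)) := by
  refine ⟨0, ?_⟩
  rintro x ⟨π, rfl⟩
  exact integral_nonneg fun p => abs_nonneg _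

lemma W1_le (μ ν : Measure ℝ) (π : Measure (ℝ × ℝ)) (h1 : π.map Prod.fst = μ)
    (h2 : π.map Prod.snd = ν) : W1 μ ν ≤ ∫ p, |p.1 - p.2| ∂π :=
  ciInf_le (W1_bddBelow μ ν) ⟨π, h1, h2⟩

lemma W1E_bddBelow (μ ν : Measure E) :
    BddBelow (Set.range fun π : {π : Measure (E × E) // π.map Prod.fst = μ ∧ π.map Prod.snd = ν}
      => ∫ p, dist p.1 p.2 ∂(π.1)) := by
  refine ⟨0, ?_⟩
  rintro x ⟨π, rfl⟩
  exact integral_nonneg fun p => dist_nonneg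

lemma W1_self (μ : Measure ℝ) [IsProbabilityMeasure μ] : W1 μ μ = 0 := by
  refine le_antisymm ?_ (W1_nonneg μ μ)
  have hd : Measurable fun x : ℝ => (x, x) := measurable_id.prodMk measurable_id
  have h1 : (μ.map fun x : ℝ => (x, x)).map Prod.fst = μ := by
    rw [Measure.map_map measurable_fst hd]
    simp [Function.comp_def]
  have h2 : (μ.map fun x : ℝ => (x, x)).map Prod.snd = μ := by
    rw [Measure.map_map measurable_snd hd]
    simp [Function.comp_def]
  refine le_trans (W1_le μ μ _ h1 h2) ?_
  rw [integral_map hd.aemeasurable]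
  · simp
  · exact ((measurable_fst.sub measurable_snd).abs).aestronglyMeasurable

/-- a coupling exists -/
lemma coupling_nonempty (μ ν : Measure E) [IsProbabilityMeasure μ] [IsProbabilityMeasure ν] :
    Nonempty {π : Measure (E × E) // π.map Prod.fst = μ ∧ π.map Prod.snd = ν} := by
  refine ⟨⟨μ.prod ν, ?_, ?_⟩⟩ <;> simp

lemma coupling_isProb {π : Measure (E × E)} {μ : Measure E} [IsProbabilityMeasure μ]
    (h1 : π.map Prod.fst = μ) : IsProbabilityMeasure π := by
  refine ⟨?_⟩
  have h : π.map Prod.fst Set.univ = 1 := by rw [h1, measure_univ]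
  rwa [Measure.map_apply measurable_fst MeasurableSet.univ, Set.preimage_univ] at h

lemma W1E_exists_lt {μ ν : Measure E} [IsProbabilityMeasure μ] [IsProbabilityMeasure ν]
    {c : ℝ} (h : W1E μ ν < c) :
    ∃ π : Measure (E × E), π.map Prod.fst = μ ∧ π.map Prod.snd = ν ∧
      ∫ p, dist p.1 p.2 ∂π < c := by
  have := coupling_nonempty μ ν
  obtain ⟨⟨π, h1, h2⟩, hπ⟩ := exists_lt_of_ciInf_lt h
  exact ⟨π, h1, h2, hπ⟩

lemma coupling_ae_mem {π : Measure (E × E)} {μ ν : Measure E} {U : Set E}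
    (hUm : MeasurableSet U) (h1 : π.map Prod.fst = μ) (h2 : π.map Prod.snd = ν)
    (hμ : μ Uᶜ = 0) (hν : ν Uᶜ = 0) : ∀ᵐ p ∂π, p.1 ∈ U ∧ p.2 ∈ U := by
  have e1 : ∀ᵐ p ∂π, p.1 ∈ U := by
    rw [ae_iff]
    have : {p : E × E | ¬ p.1 ∈ U} = Prod.fst ⁻¹' Uᶜ := rfl
    rw [this, ← Measure.map_apply measurable_fst hUm.compl, h1]; exact hμ
  have e2 : ∀ᵐ p ∂π, p.2 ∈ U := by
    rw [ae_iff]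
    have : {p : E × E | ¬ p.2 ∈ U} = Prod.snd ⁻¹' Uᶜ := rfl
    rw [this, ← Measure.map_apply measurable_snd hUm.compl, h2]; exact hν
  exact e1.and e2

end Helpers

section Main

variable {n : ℕ}

local notation "En" => EuclideanSpace ℝ (Fin n)

/-- Key bound: on a probability space, if `Y, Z` land a.e. in a compact `U` and `g` has
modulus-of-continuity data on `U`, then the expected gap of `g` values is controlled by
the expected distance. -/
lemma mainBound {Ω : Type*} [MeasurableSpace Ω] (Q : Measure Ω) [IsProbabilityMeasure Q]
    {U : Set En} (hU : IsCompact U) (Y Z : Ω → En) (hYm : Measurable Y) (hZm : Measurable Z)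
    (hYU : ∀ᵐ ω ∂Q, Y ω ∈ U) (hZU : ∀ᵐ ω ∂Q, Z ω ∈ U)
    {g : En → ℝ} (hgm : Measurable g) {C : ℝ} (hgb : ∀ x ∈ U, |g x| ≤ C) (hC : 0 ≤ C)
    {δ ε' : ℝ} (hδ : 0 < δ) (hε' : 0 ≤ ε')
    (hmod : ∀ x ∈ U, ∀ y ∈ U, dist x y < δ → |g x - g y| < ε') :
    ∫ ω, |g (Y ω) - g (Z ω)| ∂Q ≤ ε' + (2 * (C + 1) / δ) * ∫ ω, dist (Y ω) (Z ω) ∂Q := by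
  set K : ℝ := 2 * (C + 1) / δ with hK
  have hKpos : 0 < K := by positivity
  have hdm : Measurable fun ω => dist (Y ω) (Z ω) := hYm.dist hZm
  have hgm2 : Measurable fun ω => |g (Y ω) - g (Z ω)| :=
    ((hgm.comp hYm).sub (hgm.comp hZm)).abs
  have hdint : Integrable (fun ω => dist (Y ω) (Z ω)) Q := by
    refine integrable_of_bdd hdm.aestronglyMeasurable (C := Metric.diam U) ?_
    filter_upwards [hYU, hZU] with ω h1 h2
    rw [abs_of_nonneg dist_nonneg]
    exact Metric.dist_le_diam_of_mem hU.isBounded h1 h2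
  have hgint : Integrable (fun ω => |g (Y ω) - g (Z ω)|) Q := by
    refine integrable_of_bdd hgm2.aestronglyMeasurable (C := 2 * C) ?_
    filter_upwards [hYU, hZU] with ω h1 h2
    rw [abs_abs]
    calc |g (Y ω) - g (Z ω)| ≤ |g (Y ω)| + |g (Z ω)| := abs_sub _ _
    _ ≤ C + C := add_le_add (hgb _ h1) (hgb _ h2)
    _ = 2 * C := by ring
  have hpt : ∀ᵐ ω ∂Q, |g (Y ω) - g (Z ω)| ≤ ε' + K * dist (Y ω) (Z ω) := by
    filter_upwards [hYU, hZU] with ω h1 h2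
    by_cases hd : dist (Y ω) (Z ω) < δ
    · have := hmod _ h1 _ h2 hd
      nlinarith [dist_nonneg (x := Y ω) (y := Z ω)]
    · push_neg at hd
      have h2C : |g (Y ω) - g (Z ω)| ≤ 2 * C := by
        calc |g (Y ω) - g (Z ω)| ≤ |g (Y ω)| + |g (Z ω)| := abs_sub _ _
        _ ≤ C + C := add_le_add (hgb _ h1) (hgb _ h2)
        _ = 2 * C := by ring
      have hKδ : K * δ = 2 * (C + 1) := by rw [hK]; field_simp
      have : K * δ ≤ K * dist (Y ω) (Z ω) := by
        exact mul_le_mul_of_nonneg_left hd hKpos.le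
      nlinarith
  calc ∫ ω, |g (Y ω) - g (Z ω)| ∂Q ≤ ∫ ω, ε' + K * dist (Y ω) (Z ω) ∂Q := by
        refine integral_mono_ae hgint ?_ hpt
        exact (integrable_const ε').add (hdint.const_mul K)
  _ = ε' + K * ∫ ω, dist (Y ω) (Z ω) ∂Q := by
        rw [integral_add (integrable_const ε') (hdint.const_mul K), integral_const,
          integral_const_mul, probReal_univ, smul_eq_mul, one_mul]

end Main
section Main2

variable {n : ℕ}

local notation "En" => EuclideanSpace ℝ (Fin n)

lemma pairDiff {Ω : Type*} [MeasurableSpace Ω] (Q : Measure Ω) [IsProbabilityMeasure Q]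
    {U : Set En} (hU : IsCompact U) (Y Z : Ω → En) (hYm : Measurable Y) (hZm : Measurable Z)
    (hYU : ∀ᵐ ω ∂Q, Y ω ∈ U) (hZU : ∀ᵐ ω ∂Q, Z ω ∈ U)
    {g : En → ℝ} (hgm : Measurable g) {C : ℝ} (hgb : ∀ x ∈ U, |g x| ≤ C) (hC : 0 ≤ C)
    {δ ε' : ℝ} (hδ : 0 < δ) (hε' : 0 ≤ ε')
    (hmod : ∀ x ∈ U, ∀ y ∈ U, dist x y < δ → |g x - g y| < ε') :
    |(∫ ω, g (Y ω) ∂Q) - ∫ ω, g (Z ω) ∂Q| ≤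
      ε' + (2 * (C + 1) / δ) * ∫ ω, dist (Y ω) (Z ω) ∂Q := by
  have hYint : Integrable (fun ω => g (Y ω)) Q := by
    refine integrable_of_bdd (hgm.comp hYm).aestronglyMeasurable (C := C) ?_
    filter_upwards [hYU] with ω h1 using hgb _ h1
  have hZint : Integrable (fun ω => g (Z ω)) Q := by
    refine integrable_of_bdd (hgm.comp hZm).aestronglyMeasurable (C := C) ?_
    filter_upwards [hZU] with ω h1 using hgb _ h1
  have h1 : |(∫ ω, g (Y ω) ∂Q) - ∫ ω, g (Z ω) ∂Q| ≤ ∫ ω, |g (Y ω) - g (Z ω)| ∂Q := by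
    rw [← integral_sub hYint hZint]
    simpa [Real.norm_eq_abs] using
      norm_integral_le_integral_norm (μ := Q) (f := fun ω => g (Y ω) - g (Z ω))
  exact h1.trans (mainBound Q hU Y Z hYm hZm hYU hZU hgm hgb hC hδ hε' hmod)

lemma integral_diff_le {U : Set En} (hU : IsCompact U) {μ0 μ1 : Measure En}
    [IsProbabilityMeasure μ0] [IsProbabilityMeasure μ1]
    (h0 : μ0 Uᶜ = 0) (h1 : μ1 Uᶜ = 0) {g : En → ℝ} (hgm : Measurable g)
    {C : ℝ} (hgb : ∀ x ∈ U, |g x| ≤ C) (hC : 0 ≤ C) {δ ε' : ℝ} (hδ : 0 < δ) (hε' : 0 ≤ ε')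
    (hmod : ∀ x ∈ U, ∀ y ∈ U, dist x y < δ → |g x - g y| < ε') :
    |(∫ x, g x ∂μ0) - ∫ x, g x ∂μ1| ≤ ε' + (2 * (C + 1) / δ) * W1E μ0 μ1 := by
  set K : ℝ := 2 * (C + 1) / δ with hK
  have hKpos : 0 < K := by positivity
  refine le_of_forall_pos_le_add fun c hc => ?_
  have hlt : W1E μ0 μ1 < W1E μ0 μ1 + c / K := lt_add_of_pos_right _ (by positivity)
  obtain ⟨π, hπ1, hπ2, hcost⟩ := W1E_exists_lt hlt
  have hπP : IsProbabilityMeasure π := coupling_isProb hπ1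
  have hae := coupling_ae_mem (hU.isClosed.measurableSet) hπ1 hπ2 h0 h1
  have e0 : ∫ x, g x ∂μ0 = ∫ p, g p.1 ∂π := by
    rw [← hπ1, integral_map measurable_fst.aemeasurable hgm.aestronglyMeasurable]
  have e1 : ∫ x, g x ∂μ1 = ∫ p, g p.2 ∂π := by
    rw [← hπ2, integral_map measurable_snd.aemeasurable hgm.aestronglyMeasurable]
  rw [e0, e1]
  have hb := pairDiff π hU Prod.fst Prod.snd measurable_fst measurable_snd
    (hae.mono fun p h => h.1) (hae.mono fun p h => h.2) hgm hgb hC hδ hε' hmod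
  calc |(∫ p, g p.1 ∂π) - ∫ p, g p.2 ∂π| ≤ ε' + K * ∫ p, dist p.1 p.2 ∂π := hb
  _ ≤ ε' + K * (W1E μ0 μ1 + c / K) := by
      exact add_le_add_right (mul_le_mul_of_nonneg_left hcost.le hKpos.le) _
  _ = ε' + K * W1E μ0 μ1 + c := by field_simp; ring

lemma W1_map_le {U : Set En} (hU : IsCompact U) {μ0 μ1 : Measure En}
    [IsProbabilityMeasure μ0] [IsProbabilityMeasure μ1]
    (h0 : μ0 Uᶜ = 0) (h1 : μ1 Uᶜ = 0) {g : En → ℝ} (hgm : Measurable g)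
    {C : ℝ} (hgb : ∀ x ∈ U, |g x| ≤ C) (hC : 0 ≤ C) {δ ε' : ℝ} (hδ : 0 < δ) (hε' : 0 ≤ ε')
    (hmod : ∀ x ∈ U, ∀ y ∈ U, dist x y < δ → |g x - g y| < ε') :
    W1 (μ0.map g) (μ1.map g) ≤ ε' + (2 * (C + 1) / δ) * W1E μ0 μ1 := by
  set K : ℝ := 2 * (C + 1) / δ with hK
  have hKpos : 0 < K := by positivity
  refine le_of_forall_pos_le_add fun c hc => ?_
  have hlt : W1E μ0 μ1 < W1E μ0 μ1 + c / K := lt_add_of_pos_right _ (by positivity)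
  obtain ⟨π, hπ1, hπ2, hcost⟩ := W1E_exists_lt hlt
  have hπP : IsProbabilityMeasure π := coupling_isProb hπ1
  have hae := coupling_ae_mem (hU.isClosed.measurableSet) hπ1 hπ2 h0 h1
  have hT : Measurable (Prod.map g g) := hgm.prodMap hgm
  have m1 : (π.map (Prod.map g g)).map Prod.fst = μ0.map g := by
    rw [Measure.map_map measurable_fst hT, ← hπ1, Measure.map_map hgm measurable_fst]
    rfl
  have m2 : (π.map (Prod.map g g)).map Prod.snd = μ1.map g := by
    rw [Measure.map_map measurable_snd hT, ← hπ2, Measure.map_map hgm measurable_snd]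
    rfl
  have hle := W1_le (μ0.map g) (μ1.map g) _ m1 m2
  have ecost : ∫ p, |p.1 - p.2| ∂(π.map (Prod.map g g)) = ∫ p, |g p.1 - g p.2| ∂π := by
    rw [integral_map (f := fun p : ℝ × ℝ => |p.1 - p.2|) hT.aemeasurable
      ((measurable_fst.sub measurable_snd).abs).aestronglyMeasurable]
    rfl
  rw [ecost] at hle
  have hb := mainBound π hU Prod.fst Prod.snd measurable_fst measurable_snd
    (hae.mono fun p h => h.1) (hae.mono fun p h => h.2) hgm hgb hC hδ hε' hmod
  calc W1 (μ0.map g) (μ1.map g) ≤ ∫ p, |g p.1 - g p.2| ∂π := hle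
  _ ≤ ε' + K * ∫ p, dist p.1 p.2 ∂π := hb
  _ ≤ ε' + K * (W1E μ0 μ1 + c / K) := by
      exact add_le_add_right (mul_le_mul_of_nonneg_left hcost.le hKpos.le) _
  _ = ε' + K * W1E μ0 μ1 + c := by field_simp; ring

end Main2

section Glue

lemma ae_cond {Ω : Type*} [MeasurableSpace Ω] (P : Measure Ω) (s : Set Ω) {p : Ω → Prop}
    (h : ∀ᵐ ω ∂P, p ω) : ∀ᵐ ω ∂(P[|s]), p ω := by
  rw [ProbabilityTheory.cond]
  exact Measure.ae_smul_measure (ae_restrict_of_ae h) _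

lemma cond_integral_le {Ω : Type*} [MeasurableSpace Ω] (P : Measure Ω) (s : Set Ω)
    {h : Ω → ℝ} (hint : Integrable h P) (hnn : 0 ≤ᵐ[P] h) :
    ∫ ω, h ω ∂(P[|s]) ≤ (P s)⁻¹.toReal * ∫ ω, h ω ∂P := by
  rw [ProbabilityTheory.cond, integral_smul_measure, smul_eq_mul]
  exact mul_le_mul_of_nonneg_left
    (integral_mono_measure Measure.restrict_le_self hnn hint) ENNReal.toReal_nonneg

lemma modulus {n : ℕ} {U : Set (EuclideanSpace ℝ (Fin n))} (hU : IsCompact U)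
    {g : EuclideanSpace ℝ (Fin n) → ℝ} (hg : ContinuousOn g U) {ε' : ℝ} (hε' : 0 < ε') :
    ∃ δ > 0, ∀ x ∈ U, ∀ y ∈ U, dist x y < δ → |g x - g y| < ε' := by
  have huc := hU.uniformContinuousOn_of_continuous hg
  obtain ⟨δ, hδ, hd⟩ := Metric.uniformContinuousOn_iff.mp huc ε' hε'
  exact ⟨δ, hδ, fun x hx y hy hxy => by
    simpa [Real.dist_eq] using hd x hx y hy hxy⟩

end Glue

theorem stmt9 {Ω : Type*} [MeasurableSpace Ω] (P : Measure Ω) [IsProbabilityMeasure P]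
    {n : ℕ} (Xe : ℝ → Ω → EuclideanSpace ℝ (Fin n)) (X : Ω → EuclideanSpace ℝ (Fin n))
    (G : Ω → Fin 2) (U : Set (EuclideanSpace ℝ (Fin n))) (hU : IsCompact U)
    (f : EuclideanSpace ℝ (Fin n) → ℝ)
    (hXe : ∀ ε ∈ Ioi (0:ℝ), Measurable (Xe ε)) (hX : Measurable X) (hG : Measurable G)
    (hfm : Measurable f) (hf : ContinuousOn f U) (hfb : ∃ Cb, ∀ x ∈ U, |f x| ≤ Cb)
    (hXeint : ∀ ε ∈ Ioi (0:ℝ), Integrable (Xe ε) P) (hXint : Integrable X P)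
    (hXeU : ∀ ε ∈ Ioi (0:ℝ), ∀ᵐ ω ∂P, Xe ε ω ∈ U) (hXU : ∀ᵐ ω ∂P, X ω ∈ U)
    (hpos : ∀ k : Fin 2, P (G ⁻¹' {k}) ≠ 0)
    (hL1 : Tendsto (fun ε => ∫ ω, dist (Xe ε ω) (X ω) ∂P)
      (nhdsWithin 0 (Ioi 0)) (nhds 0))
    (hbias : Tendsto (fun ε =>
        W1E (Measure.map (Xe ε) (ProbabilityTheory.cond P (G ⁻¹' {0})))
            (Measure.map (Xe ε) (ProbabilityTheory.cond P (G ⁻¹' {1}))))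
      (nhdsWithin 0 (Ioi 0)) (nhds 0)) :
    Tendsto (fun ε =>
        W1 (Measure.map (fun ω => f (Xe ε ω)) (ProbabilityTheory.cond P (G ⁻¹' {0})))
           (Measure.map (fun ω => f (Xe ε ω)) (ProbabilityTheory.cond P (G ⁻¹' {1}))))
      (nhdsWithin 0 (Ioi 0)) (nhds 0) ∧
    W1 (Measure.map (fun ω => f (X ω)) (ProbabilityTheory.cond P (G ⁻¹' {0})))
       (Measure.map (fun ω => f (X ω)) (ProbabilityTheory.cond P (G ⁻¹' {1}))) = 0 := by
  have hUm : MeasurableSet U := hU.isClosed.measurableSet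
  haveI hQ0 : IsProbabilityMeasure (P[|G ⁻¹' {(0 : Fin 2)}]) :=
    cond_isProbabilityMeasure (hpos 0)
  haveI hQ1 : IsProbabilityMeasure (P[|G ⁻¹' {(1 : Fin 2)}]) :=
    cond_isProbabilityMeasure (hpos 1)
  obtain ⟨Cb, hCb⟩ := hfb
  set C : ℝ := max Cb 0 with hCdef
  have hC : 0 ≤ C := le_max_right _ _
  have hCb' : ∀ x ∈ U, |f x| ≤ C := fun x hx => (hCb x hx).trans (le_max_left _ _)
  -- support of conditioned mapped measures
  have hsupp : ∀ ε ∈ Ioi (0:ℝ), ∀ k : Fin 2,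
      (Measure.map (Xe ε) (P[|G ⁻¹' {k}])) Uᶜ = 0 := by
    intro ε hε k
    rw [Measure.map_apply (hXe ε hε) hUm.compl]
    exact ae_iff.mp (ae_cond P _ (hXeU ε hε))
  constructor
  · -- part 1
    rw [Metric.tendsto_nhds]
    intro t ht
    obtain ⟨δ, hδ, hmod⟩ := modulus hU hf (half_pos ht)
    set K : ℝ := 2 * (C + 1) / δ with hKdef
    have hKpos : 0 < K := by positivity
    have hbias' := Metric.tendsto_nhds.mp hbias (t / (2 * (K + 1))) (by positivity)
    filter_upwards [hbias', self_mem_nhdsWithin] with ε hWE hε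
    have hXm := hXe ε hε
    haveI : IsProbabilityMeasure (Measure.map (Xe ε) (P[|G ⁻¹' {(0:Fin 2)}])) :=
      Measure.isProbabilityMeasure_map hXm.aemeasurable
    haveI : IsProbabilityMeasure (Measure.map (Xe ε) (P[|G ⁻¹' {(1:Fin 2)}])) :=
      Measure.isProbabilityMeasure_map hXm.aemeasurable
    have e0 : Measure.map (fun ω => f (Xe ε ω)) (P[|G ⁻¹' {(0:Fin 2)}]) =
        (Measure.map (Xe ε) (P[|G ⁻¹' {(0:Fin 2)}])).map f :=
      (Measure.map_map hfm hXm).symm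
    have e1 : Measure.map (fun ω => f (Xe ε ω)) (P[|G ⁻¹' {(1:Fin 2)}]) =
        (Measure.map (Xe ε) (P[|G ⁻¹' {(1:Fin 2)}])).map f :=
      (Measure.map_map hfm hXm).symm
    rw [Real.dist_0_eq_abs, e0, e1]
    have hle := W1_map_le hU (hsupp ε hε 0) (hsupp ε hε 1) hfm hCb' hC hδ
      (half_pos ht).le hmod
    rw [← hKdef] at hle
    rw [abs_of_nonneg (W1_nonneg _ _)]
    rw [Real.dist_0_eq_abs] at hWE
    set w := W1E (Measure.map (Xe ε) (P[|G ⁻¹' {(0:Fin 2)}]))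
      (Measure.map (Xe ε) (P[|G ⁻¹' {(1:Fin 2)}])) with hw
    have h1 : K * w ≤ K * |w| := mul_le_mul_of_nonneg_left (le_abs_self _) hKpos.le
    have h2 : K * |w| ≤ (K + 1) * |w| :=
      mul_le_mul_of_nonneg_right (by linarith) (abs_nonneg _)
    have h3 : (K + 1) * |w| < (K + 1) * (t / (2 * (K + 1))) :=
      mul_lt_mul_of_pos_left hWE (by positivity)
    have h4 : (K + 1) * (t / (2 * (K + 1))) = t / 2 := by
      field_simp
    calc W1 _ _ ≤ t / 2 + K * w := hle
    _ < t := by linarith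
  · -- part 2
    have e0 : Measure.map (fun ω => f (X ω)) (P[|G ⁻¹' {(0:Fin 2)}]) =
        (Measure.map X (P[|G ⁻¹' {(0:Fin 2)}])).map f := (Measure.map_map hfm hX).symm
    have e1 : Measure.map (fun ω => f (X ω)) (P[|G ⁻¹' {(1:Fin 2)}]) =
        (Measure.map X (P[|G ⁻¹' {(1:Fin 2)}])).map f := (Measure.map_map hfm hX).symm
    haveI : IsProbabilityMeasure (Measure.map X (P[|G ⁻¹' {(0:Fin 2)}])) :=
      Measure.isProbabilityMeasure_map hX.aemeasurable
    haveI : IsProbabilityMeasure (Measure.map X (P[|G ⁻¹' {(1:Fin 2)}])) :=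
      Measure.isProbabilityMeasure_map hX.aemeasurable
    suffices hXeq : Measure.map X (P[|G ⁻¹' {(0:Fin 2)}]) =
        Measure.map X (P[|G ⁻¹' {(1:Fin 2)}]) by
      rw [e0, e1, hXeq]
      haveI : IsProbabilityMeasure
          ((Measure.map X (P[|G ⁻¹' {(1:Fin 2)}])).map f) :=
        Measure.isProbabilityMeasure_map hfm.aemeasurable
      exact W1_self _
    apply ext_of_forall_lintegral_eq_of_IsFiniteMeasure
    intro φ
    set g : EuclideanSpace ℝ (Fin n) → ℝ := fun x => ((φ x : ℝ≥0) : ℝ) with hgdef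
    have hgc : Continuous g := by exact NNReal.continuous_coe.comp φ.continuous
    have hgm : Measurable g := hgc.measurable
    obtain ⟨Cφ, hCφ⟩ := φ.bounded
    set Cg : ℝ := Cφ + g 0 with hCgdef
    have hg0 : ∀ x, 0 ≤ g x := fun x => (φ x).2
    have hgb : ∀ x, |g x| ≤ Cg := by
      intro x
      rw [abs_of_nonneg (hg0 x)]
      have hd : dist (φ x) (φ 0) ≤ Cφ := hCφ x 0
      have : dist (φ x) (φ 0) = |g x - g 0| := NNReal.dist_eq _ _
      have h2 : g x - g 0 ≤ |g x - g 0| := le_abs_self _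
      linarith
    have hgbU : ∀ x ∈ U, |g x| ≤ Cg := fun x _ => hgb x
    have hCg : 0 ≤ Cg := le_trans (abs_nonneg _) (hgb 0)
    have hint0 : Integrable (fun x => ((φ x : ℝ≥0) : ℝ))
        (Measure.map X (P[|G ⁻¹' {(0:Fin 2)}])) :=
      integrable_of_bdd hgm.aestronglyMeasurable (Eventually.of_forall hgb)
    have hint1 : Integrable (fun x => ((φ x : ℝ≥0) : ℝ))
        (Measure.map X (P[|G ⁻¹' {(1:Fin 2)}])) :=
      integrable_of_bdd hgm.aestronglyMeasurable (Eventually.of_forall hgb)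
    have key : ∀ t > (0:ℝ),
        |(∫ x, g x ∂(Measure.map X (P[|G ⁻¹' {(0:Fin 2)}]))) -
          ∫ x, g x ∂(Measure.map X (P[|G ⁻¹' {(1:Fin 2)}]))| ≤ t := by
      intro t ht
      obtain ⟨δ, hδ, hmod⟩ := modulus hU hgc.continuousOn (by positivity : (0:ℝ) < t/8)
      set K : ℝ := 2 * (Cg + 1) / δ with hKdef
      have hKpos : 0 < K := by positivity
      set c0 : ℝ := max ((P (G ⁻¹' {(0:Fin 2)}))⁻¹.toReal)
        ((P (G ⁻¹' {(1:Fin 2)}))⁻¹.toReal) with hc0def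
      have hc0 : 0 ≤ c0 := le_trans ENNReal.toReal_nonneg (le_max_left _ _)
      have hc00 : (P (G ⁻¹' {(0:Fin 2)}))⁻¹.toReal ≤ c0 := le_max_left _ _
      have hc01 : (P (G ⁻¹' {(1:Fin 2)}))⁻¹.toReal ≤ c0 := le_max_right _ _
      have h4a : (K + 1) * (t / (8 * (K + 1))) = t / 8 := by field_simp
      have h4b : (K + 1) * ((c0 + 1) * (t / (8 * (K + 1) * (c0 + 1)))) = t / 8 := by
        field_simp
      have hb1 := Metric.tendsto_nhds.mp hbias (t / (8 * (K + 1))) (by positivity)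
      have hb2 := Metric.tendsto_nhds.mp hL1 (t / (8 * (K + 1) * (c0 + 1))) (by positivity)
      obtain ⟨ε, ⟨hWE, hDP⟩, hε⟩ := ((hb1.and hb2).and self_mem_nhdsWithin).exists
      rw [Real.dist_0_eq_abs] at hWE hDP
      have hXm := hXe ε hε
      haveI : IsProbabilityMeasure (Measure.map (Xe ε) (P[|G ⁻¹' {(0:Fin 2)}])) :=
        Measure.isProbabilityMeasure_map hXm.aemeasurable
      haveI : IsProbabilityMeasure (Measure.map (Xe ε) (P[|G ⁻¹' {(1:Fin 2)}])) :=
        Measure.isProbabilityMeasure_map hXm.aemeasurable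
      -- distances
      have hDint : Integrable (fun ω => dist (Xe ε ω) (X ω)) P := by
        refine integrable_of_bdd (hXm.dist hX).aestronglyMeasurable
          (C := Metric.diam U) ?_
        filter_upwards [hXeU ε hε, hXU] with ω h1 h2
        rw [abs_of_nonneg dist_nonneg]
        exact Metric.dist_le_diam_of_mem hU.isBounded h1 h2
      set I : ℝ := ∫ ω, dist (Xe ε ω) (X ω) ∂P with hIdef
      have hInn : 0 ≤ I := integral_nonneg fun ω => dist_nonneg
      set D0 : ℝ := ∫ ω, dist (Xe ε ω) (X ω) ∂(P[|G ⁻¹' {(0:Fin 2)}]) with hD0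
      set D1 : ℝ := ∫ ω, dist (Xe ε ω) (X ω) ∂(P[|G ⁻¹' {(1:Fin 2)}]) with hD1
      have hD0le : D0 ≤ c0 * I := by
        refine le_trans (cond_integral_le P _ hDint
          (Eventually.of_forall fun ω => dist_nonneg)) ?_
        exact mul_le_mul_of_nonneg_right hc00 hInn
      have hD1le : D1 ≤ c0 * I := by
        refine le_trans (cond_integral_le P _ hDint
          (Eventually.of_forall fun ω => dist_nonneg)) ?_
        exact mul_le_mul_of_nonneg_right hc01 hInn
      have hD0nn : 0 ≤ D0 := integral_nonneg fun ω => dist_nonneg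
      have hD1nn : 0 ≤ D1 := integral_nonneg fun ω => dist_nonneg
      -- abbreviations
      set A0 := ∫ x, g x ∂(Measure.map X (P[|G ⁻¹' {(0:Fin 2)}])) with hA0
      set A1 := ∫ x, g x ∂(Measure.map X (P[|G ⁻¹' {(1:Fin 2)}])) with hA1
      set B0 := ∫ ω, g (Xe ε ω) ∂(P[|G ⁻¹' {(0:Fin 2)}]) with hB0
      set B1 := ∫ ω, g (Xe ε ω) ∂(P[|G ⁻¹' {(1:Fin 2)}]) with hB1
      have rA0 : A0 = ∫ ω, g (X ω) ∂(P[|G ⁻¹' {(0:Fin 2)}]) := by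
        rw [hA0, integral_map hX.aemeasurable hgm.aestronglyMeasurable]
      have rA1 : A1 = ∫ ω, g (X ω) ∂(P[|G ⁻¹' {(1:Fin 2)}]) := by
        rw [hA1, integral_map hX.aemeasurable hgm.aestronglyMeasurable]
      -- outer bounds
      have o0 : |B0 - A0| ≤ t/8 + K * D0 := by
        rw [rA0, hB0, hD0]
        exact pairDiff _ hU (Xe ε) X hXm hX (ae_cond P _ (hXeU ε hε)) (ae_cond P _ hXU)
          hgm hgbU hCg hδ (by positivity) hmod
      have o1 : |B1 - A1| ≤ t/8 + K * D1 := by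
        rw [rA1, hB1, hD1]
        exact pairDiff _ hU (Xe ε) X hXm hX (ae_cond P _ (hXeU ε hε)) (ae_cond P _ hXU)
          hgm hgbU hCg hδ (by positivity) hmod
      -- middle bound
      set w := W1E (Measure.map (Xe ε) (P[|G ⁻¹' {(0:Fin 2)}]))
        (Measure.map (Xe ε) (P[|G ⁻¹' {(1:Fin 2)}])) with hw
      have mid : |B0 - B1| ≤ t/8 + K * w := by
        rw [hB0, hB1, hw]
        have := integral_diff_le hU (hsupp ε hε 0) (hsupp ε hε 1) hgm hgbU hCg hδ
          (by positivity : (0:ℝ) ≤ t/8) hmod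
        rwa [integral_map hXm.aemeasurable hgm.aestronglyMeasurable,
          integral_map hXm.aemeasurable hgm.aestronglyMeasurable] at this
      clear_value A0 A1 B0 B1 D0 D1 I w c0
      -- numeric assembly
      have hW8 : K * w ≤ t/8 := by
        have h1 : K * w ≤ K * |w| := mul_le_mul_of_nonneg_left (le_abs_self _) hKpos.le
        have h2 : K * |w| ≤ (K + 1) * |w| :=
          mul_le_mul_of_nonneg_right (le_add_of_nonneg_right zero_le_one) (abs_nonneg _)
        have h3 : (K + 1) * |w| ≤ (K + 1) * (t / (8 * (K + 1))) :=
          mul_le_mul_of_nonneg_left hWE.le (by linarith only [hKpos])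
        linarith only [h1, h2, h3, h4a]
      have hI8 : K * (c0 * I) ≤ t/8 := by
        have h1 : K * (c0 * I) ≤ (K + 1) * ((c0 + 1) * I) := by
          nlinarith only [hKpos, hc0, hInn, mul_nonneg hKpos.le hInn,
            mul_nonneg hc0 hInn]
        have h2 : (K + 1) * ((c0 + 1) * I) ≤ (K + 1) * ((c0 + 1) * |I|) :=
          mul_le_mul_of_nonneg_left (mul_le_mul_of_nonneg_left (le_abs_self I)
            (by linarith only [hc0])) (by linarith only [hKpos])
        have h3 : (K + 1) * ((c0 + 1) * |I|) ≤
            (K + 1) * ((c0 + 1) * (t / (8 * (K + 1) * (c0 + 1)))) :=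
          mul_le_mul_of_nonneg_left (mul_le_mul_of_nonneg_left hDP.le
            (by linarith only [hc0])) (by linarith only [hKpos])
        linarith only [h1, h2, h3, h4b]
      have hKD0 : K * D0 ≤ t/8 :=
        le_trans (mul_le_mul_of_nonneg_left hD0le hKpos.le) hI8
      have hKD1 : K * D1 ≤ t/8 :=
        le_trans (mul_le_mul_of_nonneg_left hD1le hKpos.le) hI8
      calc |A0 - A1| ≤ |A0 - B0| + |B0 - A1| := abs_sub_le _ _ _
      _ ≤ |A0 - B0| + (|B0 - B1| + |B1 - A1|) := by
          linarith only [abs_sub_le B0 B1 A1]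
      _ = |B0 - A0| + (|B0 - B1| + |B1 - A1|) := by rw [abs_sub_comm]
      _ ≤ (t/8 + K * D0) + ((t/8 + K * w) + (t/8 + K * D1)) := by
          linarith only [o0, o1, mid]
      _ ≤ t := by linarith only [hW8, hKD0, hKD1, ht]
    have hreal : (∫ x, g x ∂(Measure.map X (P[|G ⁻¹' {(0:Fin 2)}]))) =
        ∫ x, g x ∂(Measure.map X (P[|G ⁻¹' {(1:Fin 2)}])) := by
      have h0 : |(∫ x, g x ∂(Measure.map X (P[|G ⁻¹' {(0:Fin 2)}]))) -
          ∫ x, g x ∂(Measure.map X (P[|G ⁻¹' {(1:Fin 2)}]))| ≤ 0 :=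
        le_of_forall_pos_le_add fun t ht => by simpa using key t ht
      exact sub_eq_zero.mp (abs_nonpos_iff.mp h0)
    rw [lintegral_coe_eq_integral φ hint0, lintegral_coe_eq_integral φ hint1]
    exact congrArg ENNReal.ofReal hreal
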